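/- arXiv:1003.1646 — 3 statements merged into one kernel-verified Lean document; each statement's English description precedes it below -/
import Mathlib

section
/- For every positive even integer n, the denominator of the Bernoulli number B_n (in lowest terms) equals the product of all primes p such that p - 1 divides n; in particular, the denominator of B_n is squarefree. -/
open Finset

-- binomial identity
lemma vsc_choose (m i : ℕ) (h : i ≤ m) :
    ((m + 1 - i : ℕ) : ℚ) * ((m+1).choose i) = (m + 1 : ℕ) * (m.choose i) := by
  have h1 : m.choose i = m.choose (m - i) := (Nat.choose_symm h).symm
  have h2 : (m+1) * m.choose (m - i) = (m+1).choose (m - i + 1) * (m - i + 1) :=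
    Nat.add_one_mul_choose_eq m (m - i)
  have h3 : (m+1).choose (m - i + 1) = (m+1).choose i := by
    rw [← Nat.choose_symm (by omega : m - i + 1 ≤ m + 1)]
    congr 1
    omega
  have h4 : m + 1 - i = m - i + 1 := by omega
  rw [h4, h1, ← h3]
  exact_mod_cast (mul_comm ((m - i + 1 : ℕ)) _).trans h2.symm

lemma vsc_key (p m : ℕ) :
    (p : ℚ) * bernoulli m =
      (∑ k ∈ range p, (k : ℚ) ^ m) -
        ∑ i ∈ range m, bernoulli i * (m.choose i) * (p : ℚ) ^ (m + 1 - i) / ((m + 1 - i : ℕ) : ℚ) := by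
  have hF : ∀ i ∈ range (m+1),
      bernoulli i * ((m+1).choose i) * (p : ℚ) ^ (m + 1 - i) / (m+1)
        = bernoulli i * (m.choose i) * (p : ℚ) ^ (m + 1 - i) / ((m + 1 - i : ℕ) : ℚ) := by
    intro i hi
    have h : i ≤ m := by simpa [Nat.lt_succ_iff] using hi
    have hc := vsc_choose m i h
    have hj : ((m + 1 - i : ℕ) : ℚ) ≠ 0 := by
      have : 0 < m + 1 - i := by omega
      exact_mod_cast this.ne'
    have hm1 : ((m : ℚ) + 1) ≠ 0 := by positivity
    field_simp
    push_cast at hc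
    linear_combination (bernoulli i * (p:ℚ) ^ (m + 1 - i)) * hc
  have hfa := sum_range_pow p m
  rw [Finset.sum_congr rfl hF] at hfa
  rw [Finset.sum_range_succ] at hfa
  simp only [Nat.choose_self, Nat.add_sub_cancel_left] at hfa
  rw [hfa]
  push_cast
  ring

lemma vsc_lt_two_pow (j : ℕ) : j < 2 ^ j := (Nat.lt_two_pow_self (n := j))

lemma vsc_val_le₁ (p : ℕ) [hp : Fact p.Prime] (j : ℕ) (hj : j ≠ 0) :
    (padicValNat p j : ℤ) ≤ (j : ℤ) - 1 := by
  have hdvd : p ^ padicValNat p j ∣ j := pow_padicValNat_dvd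
  have hle : p ^ padicValNat p j ≤ j := Nat.le_of_dvd (Nat.pos_of_ne_zero hj) hdvd
  have h2 : 2 ^ padicValNat p j ≤ j :=
    le_trans (Nat.pow_le_pow_left hp.out.two_le _) hle
  have := lt_of_le_of_lt h2 ((Nat.lt_two_pow_self (n := j)))
  have : padicValNat p j < j := (Nat.pow_lt_pow_iff_right (by norm_num)).mp this
  omega

lemma vsc_val_le₂ (p : ℕ) [hp : Fact p.Prime] (j : ℕ) (hj : 3 ≤ j) :
    (padicValNat p j : ℤ) ≤ (j : ℤ) - 2 := by
  have hdvd : p ^ padicValNat p j ∣ j := pow_padicValNat_dvd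
  have hle : p ^ padicValNat p j ≤ j := Nat.le_of_dvd (by omega) hdvd
  have h2 : 2 ^ padicValNat p j ≤ j :=
    le_trans (Nat.pow_le_pow_left hp.out.two_le _) hle
  have hjj : j < 2 ^ (j - 1) := by
    clear h2 hle hdvd
    induction j with
    | zero => omega
    | succ k ih =>
      rcases Nat.lt_or_ge k 3 with h | h
      · interval_cases k <;> first | omega | norm_num
      · have := ih (by omega)
        have hk : k + 1 - 1 = (k - 1) + 1 := by omega
        rw [hk, pow_succ]
        omega
  have : 2 ^ padicValNat p j < 2 ^ (j - 1) := lt_of_le_of_lt h2 hjj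
  have : padicValNat p j < j - 1 := (Nat.pow_lt_pow_iff_right (by norm_num)).mp this
  omega

lemma vsc_norm_nat (p : ℕ) [hp : Fact p.Prime] (j : ℕ) (hj : j ≠ 0) :
    padicNorm p (j : ℚ) = (p : ℚ) ^ (-(padicValNat p j : ℤ)) := by
  rw [padicNorm.eq_zpow_of_nonzero (by exact_mod_cast hj), padicValRat.of_nat]

lemma vsc_term (p : ℕ) [hp : Fact p.Prime] (b : ℚ) (c j : ℕ)
    (hb : padicNorm p b ≤ p) (hj : j ≠ 0) :
    padicNorm p (b * c * (p : ℚ) ^ j / j) ≤ (p : ℚ) ^ (1 + (padicValNat p j : ℤ) - j) := by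
  have hp0 : (0:ℚ) < p := by exact_mod_cast hp.out.pos
  rw [padicNorm.div, padicNorm.mul, padicNorm.mul, vsc_norm_nat p j hj]
  have hppow : padicNorm p ((p:ℚ) ^ j) = (p:ℚ) ^ (-(j:ℤ)) := by
    have : ((p:ℚ) ^ j) = ((p^j : ℕ) : ℚ) := by push_cast; ring
    rw [this, vsc_norm_nat p _ (pow_ne_zero _ hp.out.ne_zero), padicValNat.prime_pow]
  rw [hppow]
  have hc : padicNorm p (c : ℚ) ≤ 1 := padicNorm.of_nat c
  have h1 : padicNorm p b * padicNorm p (c:ℚ) * (p:ℚ) ^ (-(j:ℤ)) ≤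
      (p:ℚ) * 1 * (p:ℚ) ^ (-(j:ℤ)) := by
    gcongr <;> exact padicNorm.nonneg _
  rw [div_le_iff₀ (by positivity), ← zpow_natCast (p:ℚ) j] at *
  calc padicNorm p b * padicNorm p (c:ℚ) * (p:ℚ) ^ (-(j:ℤ))
      ≤ (p:ℚ) * 1 * (p:ℚ) ^ (-(j:ℤ)) := h1
    _ = (p:ℚ) ^ (1 + (padicValNat p j : ℤ) - (j:ℤ)) * (p:ℚ) ^ (-(padicValNat p j : ℤ)) := by
        rw [mul_one, ← zpow_add₀ hp0.ne', ← zpow_one_add₀ hp0.ne']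
        congr 1
        ring

lemma vsc_norm_bernoulli_le (p : ℕ) [hp : Fact p.Prime] (m : ℕ) :
    padicNorm p (bernoulli m) ≤ (p : ℚ) := by
  have hp0 : (0:ℚ) < p := by exact_mod_cast hp.out.pos
  induction m using Nat.strong_induction_on with
  | _ m ih =>
  by_cases hB : bernoulli m = 0
  · rw [hB, padicNorm.zero]; positivity
  have h1 : padicNorm p ((p:ℚ) * bernoulli m) ≤ 1 := by
    rw [vsc_key p m]
    refine le_trans padicNorm.sub (max_le ?_ ?_)
    · have hcast : (∑ k ∈ Finset.range p, (k:ℚ)^m) = ((∑ k ∈ Finset.range p, k^m : ℕ) : ℚ) := by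
        push_cast; ring
      rw [hcast]; exact padicNorm.of_nat _
    · refine padicNorm.sum_le' (fun i hi => ?_) zero_le_one
      have him : i < m := Finset.mem_range.mp hi
      have hj : m + 1 - i ≠ 0 := by omega
      refine le_trans (vsc_term p (bernoulli i) (m.choose i) (m+1-i) (ih i him) hj) ?_
      have hv := vsc_val_le₁ p (m+1-i) hj
      calc (p:ℚ) ^ (1 + (padicValNat p (m+1-i) : ℤ) - (m+1-i : ℕ)) ≤ (p:ℚ) ^ (0:ℤ) := by
            apply zpow_le_zpow_right₀ (by exact_mod_cast hp.out.one_lt.le)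
            omega
        _ = 1 := zpow_zero _
  rw [padicNorm.mul, padicNorm.padicNorm_p_of_prime] at h1
  calc padicNorm p (bernoulli m) = (p:ℚ) * ((p:ℚ)⁻¹ * padicNorm p (bernoulli m)) := by
        field_simp
    _ ≤ (p:ℚ) * 1 := by gcongr
    _ = p := mul_one _

lemma vsc_cong (p : ℕ) [hp : Fact p.Prime] (n : ℕ) (hn : 0 < n) (hne : Even n) :
    padicNorm p ((p:ℚ) * bernoulli n - ((∑ k ∈ Finset.range p, k^n : ℕ) : ℚ)) ≤ (p:ℚ)⁻¹ := by
  have hp0 : (0:ℚ) < p := by exact_mod_cast hp.out.pos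
  have hp1 : (1:ℚ) ≤ p := by exact_mod_cast hp.out.one_lt.le
  have hcast : ((∑ k ∈ Finset.range p, k^n : ℕ) : ℚ) = ∑ k ∈ Finset.range p, (k:ℚ)^n := by
    push_cast; ring
  rw [hcast, vsc_key p n]
  rw [sub_sub_cancel_left]
  rw [padicNorm.neg]
  refine padicNorm.sum_le' (fun i hi => ?_) (by positivity)
  have him : i < n := Finset.mem_range.mp hi
  rcases Nat.lt_or_ge i (n-1) with hcase | hcase
  · -- j ≥ 3
    have hj : n + 1 - i ≠ 0 := by omega
    refine le_trans (vsc_term p (bernoulli i) (n.choose i) (n+1-i) (vsc_norm_bernoulli_le p i) hj) ?_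
    have hv := vsc_val_le₂ p (n+1-i) (by omega)
    calc (p:ℚ) ^ (1 + (padicValNat p (n+1-i) : ℤ) - (n+1-i : ℕ)) ≤ (p:ℚ) ^ (-1 : ℤ) := by
          apply zpow_le_zpow_right₀ hp1
          omega
      _ = (p:ℚ)⁻¹ := zpow_neg_one _
  · -- i = n - 1
    have hieq : i = n - 1 := by omega
    subst hieq
    rcases Nat.lt_or_ge n 3 with hn2 | hn3
    · -- n = 2
      have hn2' : n = 2 := by
        rcases hne with ⟨r, hr⟩; omega
      subst hn2'
      norm_num [bernoulli_one]
      have hpp : padicNorm p ((p:ℚ)^2) = (p:ℚ) ^ (-2 : ℤ) := by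
        have h : ((p:ℚ)^2) = ((p^2 : ℕ) : ℚ) := by push_cast; ring
        rw [h, vsc_norm_nat p _ (pow_ne_zero _ hp.out.ne_zero), padicValNat.prime_pow]
        norm_num
      have hv : padicValRat p 2 = (padicValNat p 2 : ℤ) := by
        have h : ((2:ℕ):ℚ) = (2:ℚ) := by norm_num
        rw [← h, padicValRat.of_nat]
      have hv2 : (padicValNat p 2 : ℤ) ≤ 1 := by
        have := vsc_val_le₁ p 2 (by norm_num); omega
      rw [hpp, hv, ← zpow_add₀ hp0.ne', ← zpow_neg_one]
      apply zpow_le_zpow_right₀ hp1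
      omega
    · -- n ≥ 3, n even, so n-1 odd ≥ 3 and bernoulli (n-1) = 0
      have hodd : Odd (n-1) := by
        rcases hne with ⟨r, hr⟩
        exact ⟨r - 1, by omega⟩
      have hb0 : bernoulli (n-1) = 0 := by
        rw [bernoulli_eq_bernoulli'_of_ne_one (by omega)]
        exact bernoulli'_eq_zero_of_odd hodd (by omega)
      rw [hb0]
      simp only [zero_mul, zero_div, padicNorm.zero]
      positivity

lemma vsc_sum_mod (p : ℕ) [hp : Fact p.Prime] (n : ℕ) (hn : 0 < n) :
    ((∑ k ∈ Finset.range p, k^n : ℕ) : ZMod p) = if (p - 1) ∣ n then -1 else 0 := by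
  classical
  push_cast
  have h1 : (∑ k ∈ Finset.range p, (k : ZMod p)^n) = ∑ x : ZMod p, x^n := by
    refine Finset.sum_nbij' (fun k => (k : ZMod p)) (fun x => x.val)
      (fun a _ => Finset.mem_univ _)
      (fun a _ => Finset.mem_range.mpr (ZMod.val_lt a))
      (fun a ha => ZMod.val_cast_of_lt (Finset.mem_range.mp ha))
      (fun a _ => ZMod.natCast_rightInverse a)
      (fun a _ => rfl)
  have h2 : (∑ x : ZMod p, x^n) = ∑ x : (ZMod p)ˣ, (x : ZMod p)^n := by
    let φ : (ZMod p)ˣ ↪ ZMod p := ⟨fun x => x, Units.val_injective⟩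
    have hm : Finset.univ.map φ = Finset.univ.erase 0 := by
      ext x
      simp only [Finset.mem_map, Finset.mem_univ, true_and, Finset.mem_erase, and_true]
      constructor
      · rintro ⟨u, rfl⟩; exact u.ne_zero
      · intro hx; exact ⟨(Ne.isUnit hx).unit, rfl⟩
    have := Finset.sum_erase_add Finset.univ (fun x : ZMod p => x^n) (Finset.mem_univ 0)
    rw [← this]
    simp only [zero_pow hn.ne', add_zero]
    rw [← hm, Finset.sum_map]
    rfl
  rw [h1, h2]
  have := FiniteField.sum_pow_units (ZMod p) n
  rwa [ZMod.card p] at this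

lemma vsc_not_dvd_sum (p n : ℕ) [hp : Fact p.Prime] (hn : 0 < n) (h : (p - 1) ∣ n) :
    ¬ p ∣ (∑ k ∈ Finset.range p, k^n) := by
  intro hdvd
  have h0 : ((∑ k ∈ Finset.range p, k^n : ℕ) : ZMod p) = 0 :=
    (ZMod.natCast_eq_zero_iff _ _).mpr hdvd
  rw [vsc_sum_mod p n hn, if_pos h] at h0
  have : (1 : ZMod p) = 0 := by
    have := congrArg (fun x => -x) h0
    simpa using this
  exact one_ne_zero this

lemma vsc_dvd_sum (p n : ℕ) [hp : Fact p.Prime] (hn : 0 < n) (h : ¬ (p - 1) ∣ n) :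
    p ∣ (∑ k ∈ Finset.range p, k^n) := by
  have h0 : ((∑ k ∈ Finset.range p, k^n : ℕ) : ZMod p) = 0 := by
    rw [vsc_sum_mod p n hn, if_neg h]
  exact (ZMod.natCast_eq_zero_iff _ _).mp h0

lemma vsc_bernoulli_ne_zero (n : ℕ) (hn : 0 < n) (hne : Even n) : bernoulli n ≠ 0 := by
  intro h
  haveI : Fact (Nat.Prime 2) := ⟨Nat.prime_two⟩
  have hc := vsc_cong 2 n hn hne
  rw [h, mul_zero, zero_sub, padicNorm.neg] at hc
  have hdvd : ¬ (2:ℕ) ∣ (∑ k ∈ Finset.range 2, k^n) :=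
    vsc_not_dvd_sum 2 n hn (by norm_num)
  have h1 : padicNorm 2 ((∑ k ∈ Finset.range 2, k^n : ℕ) : ℚ) = 1 :=
    (padicNorm.nat_eq_one_iff _).mpr hdvd
  rw [h1] at hc
  norm_num at hc

lemma vsc_factorization (p n : ℕ) [hp : Fact p.Prime] (hn : 0 < n) (hne : Even n) :
    (bernoulli n).den.factorization p = if (p - 1) ∣ n then 1 else 0 := by
  have hB := vsc_bernoulli_ne_zero n hn hne
  have hp0 : (0:ℚ) < p := by exact_mod_cast hp.out.pos
  have hp1 : (1:ℚ) < p := by exact_mod_cast hp.out.one_lt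
  set q : ℚ := bernoulli n with hq
  set v : ℤ := padicValRat p q with hv
  -- `v ≥ -1`
  have hA := vsc_norm_bernoulli_le p n
  rw [padicNorm.eq_zpow_of_nonzero hB] at hA
  have hv_ge : -1 ≤ v := by
    have : (p:ℚ) ^ (-v) ≤ (p:ℚ) ^ (1:ℤ) := by rwa [zpow_one]
    have := (zpow_le_zpow_iff_right₀ hp1).mp this
    omega
  have hcong := vsc_cong p n hn hne
  have hnum : p ∣ q.den → padicValInt p q.num = 0 := by
    intro hden
    apply padicValInt.eq_zero_of_not_dvd
    intro hnuma
    have hnum' : p ∣ q.num.natAbs := by simpa using Int.natAbs_dvd_natAbs.mpr hnuma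
    have hg : p ∣ 1 := q.reduced ▸ Nat.dvd_gcd hnum' hden
    exact hp.out.ne_one (Nat.dvd_one.mp hg)
  by_cases h : (p - 1) ∣ n
  · rw [if_pos h]
    -- Norm of the sum is 1
    have hSnorm : padicNorm p ((∑ k ∈ Finset.range p, k^n : ℕ) : ℚ) = 1 :=
      (padicNorm.nat_eq_one_iff _).mpr (vsc_not_dvd_sum p n hn h)
    have hlt : padicNorm p ((p:ℚ) * q - ((∑ k ∈ Finset.range p, k^n : ℕ) : ℚ)) <
        padicNorm p ((∑ k ∈ Finset.range p, k^n : ℕ) : ℚ) := by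
      rw [hSnorm]
      exact lt_of_le_of_lt hcong (by rw [inv_lt_one_iff₀]; right; exact hp1)
    have hone : padicNorm p ((p:ℚ) * q) = 1 := by
      have heq : (p:ℚ) * q = ((p:ℚ) * q - ((∑ k ∈ Finset.range p, k^n : ℕ) : ℚ)) +
          ((∑ k ∈ Finset.range p, k^n : ℕ) : ℚ) := by ring
      rw [heq, padicNorm.add_eq_max_of_ne (ne_of_lt hlt), max_eq_right hlt.le, hSnorm]
    rw [padicNorm.mul, padicNorm.padicNorm_p_of_prime, padicNorm.eq_zpow_of_nonzero hB,
      ← zpow_neg_one, ← zpow_add₀ hp0.ne'] at hone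
    have hveq : v = -1 := by
      have h0 : (p:ℚ) ^ (-1 + -v) = (p:ℚ) ^ (0:ℤ) := by rw [zpow_zero]; exact hone
      have := zpow_right_injective₀ hp0 (by exact_mod_cast hp.out.ne_one) h0
      omega
    -- now p ∣ den and valuation computation
    have hden : p ∣ q.den := by
      by_contra hden
      have h0 : padicValNat p q.den = 0 := padicValNat.eq_zero_of_not_dvd hden
      rw [hv, padicValRat_def, h0] at hveq
      omega
    have h0 := hnum hden
    rw [hv, padicValRat_def, h0] at hveq
    rw [Nat.factorization_def _ hp.out]
    omega
  · rw [if_neg h]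
    -- v ≥ 0, so p does not divide the denominator
    have hSdvd : padicNorm p ((∑ k ∈ Finset.range p, k^n : ℕ) : ℚ) ≤ (p:ℚ) ^ (-1 : ℤ) := by
      have hd : ((p^1 : ℕ) : ℤ) ∣ ((∑ k ∈ Finset.range p, k^n : ℕ) : ℤ) := by
        rw [pow_one]
        exact_mod_cast vsc_dvd_sum p n hn h
      have := (padicNorm.dvd_iff_norm_le (p := p) (n := 1)
        (z := ((∑ k ∈ Finset.range p, k^n : ℕ) : ℤ))).mp hd
      simpa using this
    have hpBle : padicNorm p ((p:ℚ) * q) ≤ (p:ℚ) ^ (-1 : ℤ) := by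
      have heq : (p:ℚ) * q = ((p:ℚ) * q - ((∑ k ∈ Finset.range p, k^n : ℕ) : ℚ)) +
          ((∑ k ∈ Finset.range p, k^n : ℕ) : ℚ) := by ring
      rw [heq]
      refine le_trans padicNorm.nonarchimedean (max_le ?_ hSdvd)
      rwa [zpow_neg_one]
    rw [padicNorm.mul, padicNorm.padicNorm_p_of_prime, padicNorm.eq_zpow_of_nonzero hB,
      ← zpow_neg_one, ← zpow_add₀ hp0.ne'] at hpBle
    have hv_ge0 : 0 ≤ v := by
      have := (zpow_le_zpow_iff_right₀ hp1).mp hpBle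
      omega
    apply Nat.factorization_eq_zero_of_not_dvd
    intro hden
    have h0 := hnum hden
    have h1 : padicValNat p q.den ≠ 0 := by
      intro hz
      rcases padicValNat.eq_zero_iff.mp hz with h'|h'|h'
      exacts [hp.out.ne_one h', q.den_nz h', h' hden]
    rw [hv, padicValRat_def, h0] at hv_ge0
    omega

theorem bernoulli_den_eq_prod_primes (n : ℕ) (hn : 0 < n) (hne : Even n) :
    (bernoulli n).den =
      ∏ p ∈ (Finset.range (n + 2)).filter (fun p => p.Prime ∧ (p - 1) ∣ n), p ∧
    Squarefree (bernoulli n).den := by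
  classical
  set P := (Finset.range (n + 2)).filter (fun p => p.Prime ∧ (p - 1) ∣ n) with hP
  have hPprime : ∀ q ∈ P, q.Prime := by
    intro q hq
    exact (Finset.mem_filter.mp hq).2.1
  set N := ∏ p ∈ P, p with hN
  have hN0 : N ≠ 0 := by
    rw [hN]
    exact Finset.prod_ne_zero_iff.mpr (fun q hq => (hPprime q hq).pos.ne')
  have hNfact : ∀ p : ℕ, N.factorization p = if p ∈ P then 1 else 0 := by
    intro p
    rw [hN, Nat.factorization_prod (fun q hq => (hPprime q hq).pos.ne')]
    rw [Finset.sum_apply']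
    rw [Finset.sum_congr rfl (fun q hq => by
      rw [Nat.Prime.factorization (hPprime q hq), Finsupp.single_apply])]
    exact Finset.sum_ite_eq' P p (fun _ => 1)
  have hmem : ∀ p : ℕ, p.Prime → (p ∈ P ↔ (p - 1) ∣ n) := by
    intro p hp
    rw [hP, Finset.mem_filter, Finset.mem_range]
    constructor
    · exact fun h => h.2.2
    · intro h
      have h1 : p - 1 ≤ n := Nat.le_of_dvd hn h
      exact ⟨by omega, hp, h⟩
  have hfact : ∀ p : ℕ, (bernoulli n).den.factorization p = N.factorization p := by
    intro p
    by_cases hp : p.Prime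
    · haveI : Fact p.Prime := ⟨hp⟩
      rw [vsc_factorization p n hn hne, hNfact p]
      simp only [hmem p hp]
    · rw [Nat.factorization_eq_zero_of_not_prime _ hp,
        Nat.factorization_eq_zero_of_not_prime _ hp]
  have hden : (bernoulli n).den = N :=
    Nat.eq_of_factorization_eq (bernoulli n).den_nz hN0 hfact
  refine ⟨hden, ?_⟩
  rw [(Nat.squarefree_iff_factorization_le_one (bernoulli n).den_nz)]
  intro p
  by_cases hp : p.Prime
  · haveI : Fact p.Prime := ⟨hp⟩
    rw [vsc_factorization p n hn hne]
    split <;> norm_num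
  · rw [Nat.factorization_eq_zero_of_not_prime _ hp]
    norm_num
end

section
/- Let k and m be positive integers with k even, and write B_k = N_k/D_k in lowest terms with D_k > 0. For r = 1: m^2 divides S_k(m) if and only if m divides N_k. -/
open Finset



lemma padic_norm_sum_le {p : ℕ} [Fact p.Prime] {ι : Type*} (s : Finset ι) (f : ι → ℚ_[p])
    {C : ℝ} (hC : 0 ≤ C) (h : ∀ i ∈ s, ‖f i‖ ≤ C) : ‖∑ i ∈ s, f i‖ ≤ C := by
  classical
  induction s using Finset.induction with
  | empty => simpa using hC
  | insert a s' hx ih =>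
    rw [Finset.sum_insert hx]
    refine le_trans (Padic.nonarchimedean _ _) (max_le (h _ (mem_insert_self _ _)) ?_)
    exact ih fun i hi => h i (mem_insert_of_mem hi)

lemma norm_natCast_eq {p : ℕ} [Fact p.Prime] (j : ℕ) (hj : 0 < j) :
    ‖(j : ℚ_[p])‖ = (p : ℝ) ^ (-(padicValNat p j : ℤ)) := by
  have hne : (j : ℚ_[p]) ≠ 0 := Nat.cast_ne_zero.mpr hj.ne'
  rw [Padic.norm_eq_zpow_neg_valuation hne, Padic.valuation_natCast]

lemma pz {p : ℕ} (hp : 2 ≤ p) {a b : ℤ} (h : a ≤ b) : (p:ℝ) ^ a ≤ (p:ℝ) ^ b := by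
  apply zpow_le_zpow_right₀ (by exact_mod_cast Nat.one_le_iff_ne_zero.mpr (by omega) : (1:ℝ) ≤ p) h

lemma h2t (p t : ℕ) (hp : 2 ≤ p) : t + 1 ≤ p ^ t :=
  le_trans (Nat.lt_two_pow_self (n := t)) (Nat.pow_le_pow_left hp t)

lemma h3t (t : ℕ) (ht : 1 ≤ t) : t + 2 ≤ 3 ^ t := by
  induction t with
  | zero => omega
  | succ n ih =>
    rcases Nat.eq_zero_or_pos n with rfl | hn
    · norm_num
    · have := ih hn; calc n + 1 + 2 ≤ 3 * (n + 2) := by omega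
        _ ≤ 3 * 3 ^ n := by omega
        _ = 3 ^ (n+1) := by ring

lemma h5t (t : ℕ) (ht : 1 ≤ t) : t + 3 ≤ 5 ^ t := by
  induction t with
  | zero => omega
  | succ n ih =>
    rcases Nat.eq_zero_or_pos n with rfl | hn
    · norm_num
    · have := ih hn; calc n + 1 + 3 ≤ 5 * (n + 3) := by omega
        _ ≤ 5 * 5 ^ n := by omega
        _ = 5 ^ (n+1) := by ring



lemma choose_id (k i : ℕ) (hik : i ≤ k) :
    (k + 1) * k.choose i = (k+1).choose i * (k + 1 - i) := by
  have h1 := Nat.add_one_mul_choose_eq k (k - i)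
  rw [Nat.choose_symm hik] at h1
  have h2 : (k+1).choose (k - i + 1) = (k+1).choose i := by
    rw [show k - i + 1 = (k+1) - i by omega, Nat.choose_symm (by omega)]
  have h3 : k - i + 1 = k + 1 - i := by omega
  rw [h3] at h1
  rw [show k - i + 1 = k + 1 - i by omega] at h2
  rw [h2] at h1
  exact h1

lemma faulhaber'' (k m : ℕ) :
    (∑ i ∈ range m, (i:ℚ)^k) =
      bernoulli k * m + ∑ i ∈ range k, bernoulli i * (k.choose i) * (m:ℚ)^(k+1-i) / ((k+1-i : ℕ) : ℚ) := by
  rw [sum_range_pow m k, Finset.sum_range_succ, add_comm (bernoulli k * (m:ℚ))]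
  congr 1
  · apply Finset.sum_congr rfl
    intro i hi
    have hik : i ≤ k := le_of_lt (mem_range.mp hi)
    have hc := choose_id k i hik
    have h1 : ((k:ℚ) + 1) ≠ 0 := by positivity
    have h2 : ((k + 1 - i : ℕ) : ℚ) ≠ 0 := by
      have : 0 < k + 1 - i := by omega
      exact_mod_cast this.ne'
    have hcq : ((k:ℚ) + 1) * (k.choose i) = ((k+1).choose i : ℚ) * ((k + 1 - i : ℕ) : ℚ) := by
      exact_mod_cast congrArg (Nat.cast : ℕ → ℚ) hc
    rw [div_eq_div_iff h1 h2]
    linear_combination (-(bernoulli i * (m:ℚ)^(k+1-i))) * hcq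
  · rw [Nat.choose_succ_self_right, show k + 1 - k = 1 by omega]
    push_cast
    have h1 : ((k:ℚ) + 1) ≠ 0 := by positivity
    field_simp

lemma norm_term_le (p : ℕ) [hp : Fact p.Prime] (b : ℚ) (c j m : ℕ) (hj : 0 < j)
    (eB : ℤ) (a : ℕ)
    (hB : ‖((b : ℚ) : ℚ_[p])‖ ≤ (p:ℝ) ^ eB)
    (hM : ‖((m : ℕ) : ℚ_[p])‖ ≤ (p:ℝ) ^ (-(a:ℤ))) :
    ‖((b * c * (m:ℚ) ^ j / ((j : ℕ) : ℚ) : ℚ) : ℚ_[p])‖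
      ≤ (p:ℝ) ^ (eB - (j:ℤ) * a + padicValNat p j) := by
  have hp2 : 2 ≤ p := hp.out.two_le
  have hppos : (0:ℝ) < p := by exact_mod_cast (by omega : 0 < p)
  have hcast : ((b * c * (m:ℚ) ^ j / ((j : ℕ) : ℚ) : ℚ) : ℚ_[p])
      = (b : ℚ_[p]) * (c : ℚ_[p]) * ((m : ℚ_[p])) ^ j / ((j : ℕ) : ℚ_[p]) := by
    push_cast; ring
  rw [hcast, norm_div, norm_mul, norm_mul, norm_pow, norm_natCast_eq j hj]
  have hc1 : ‖((c:ℕ) : ℚ_[p])‖ ≤ 1 := by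
    have : ((c:ℕ) : ℚ_[p]) = ((c : ℤ) : ℚ_[p]) := by push_cast; ring
    rw [this]; exact Padic.norm_int_le_one c
  have hM0 : (0:ℝ) ≤ (p:ℝ) ^ (-(a:ℤ)) := le_of_lt (zpow_pos hppos _)
  have step : ‖(b : ℚ_[p])‖ * ‖((c:ℕ) : ℚ_[p])‖ * ‖((m:ℕ) : ℚ_[p])‖ ^ j
      ≤ (p:ℝ) ^ eB * 1 * ((p:ℝ) ^ (-(a:ℤ))) ^ j := by
    gcongr <;> first | exact norm_nonneg _ | exact zpow_nonneg hppos.le _ | assumption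
  calc ‖(b : ℚ_[p])‖ * ‖((c:ℕ) : ℚ_[p])‖ * ‖((m:ℕ)  : ℚ_[p])‖ ^ j / (p:ℝ) ^ (-(padicValNat p j : ℤ))
      ≤ ((p:ℝ) ^ eB * 1 * ((p:ℝ) ^ (-(a:ℤ))) ^ j) / (p:ℝ) ^ (-(padicValNat p j : ℤ)) := by
        exact (div_le_div_iff_of_pos_right (zpow_pos hppos _)).mpr step
      _ = (p:ℝ) ^ (eB - (j:ℤ) * a + padicValNat p j) := by
        rw [mul_one, ← zpow_natCast ((p:ℝ) ^ (-(a:ℤ))) j, ← zpow_mul, div_eq_mul_inv,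
          ← zpow_neg, ← zpow_add₀ hppos.ne', ← zpow_add₀ hppos.ne']
        congr 1
        push_cast
        ring

section
variable (p : ℕ) [hp : Fact p.Prime]

lemma padic_norm_sub_le (a b : ℚ_[p]) : ‖a - b‖ ≤ max ‖a‖ ‖b‖ := by
  rw [sub_eq_add_neg]
  exact le_trans (Padic.nonarchimedean _ _) (by rw [norm_neg])

lemma norm_p_zpow : ‖(p : ℚ_[p])‖ = (p:ℝ) ^ (-(1:ℕ):ℤ) := by
  rw [Padic.norm_p]; norm_num

lemma norm_bernoulli_le (n : ℕ) : ‖((bernoulli n : ℚ) : ℚ_[p])‖ ≤ (p:ℝ) ^ (1:ℤ) := by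
  induction n using Nat.strong_induction_on with
  | _ n IH =>
  have hp2 : 2 ≤ p := hp.out.two_le
  have hppos : (0:ℝ) < p := by exact_mod_cast (by omega : 0 < p)
  have hrearr : (bernoulli n * p : ℚ) =
      (∑ i ∈ range p, (i:ℚ)^n)
        - ∑ i ∈ range n, bernoulli i * (n.choose i) * (p:ℚ)^(n+1-i) / ((n+1-i : ℕ) : ℚ) := by
    rw [faulhaber'' n p]; ring
  have hnorm1 : ‖((bernoulli n * p : ℚ) : ℚ_[p])‖ ≤ 1 := by
    rw [hrearr, Rat.cast_sub]
    refine le_trans (padic_norm_sub_le p _ _) (max_le ?_ ?_)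
    · have : ((∑ i ∈ range p, (i:ℚ)^n : ℚ) : ℚ_[p]) = (((∑ i ∈ range p, i^n : ℕ) : ℤ) : ℚ_[p]) := by
        push_cast; ring
      rw [this]; exact Padic.norm_int_le_one _
    · rw [Rat.cast_sum]
      apply padic_norm_sum_le _ _ zero_le_one
      intro i hi
      have hiltn : i < n := mem_range.mp hi
      set j := n + 1 - i with hj
      have hjpos : 0 < j := by omega
      have hb := norm_term_le p (bernoulli i) (n.choose i) j p hjpos 1 1 (IH i hiltn)
        (by rw [← norm_p_zpow])
      refine le_trans hb ?_
      have h1 : (1:ℝ) = (p:ℝ) ^ (0:ℤ) := by norm_num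
      rw [h1]
      apply pz hp2
      have hdvd : p ^ padicValNat p j ≤ j := Nat.le_of_dvd hjpos pow_padicValNat_dvd
      have := h2t p (padicValNat p j) hp2
      omega
  have hfin : ‖((bernoulli n : ℚ) : ℚ_[p])‖ * (p:ℝ)⁻¹ ≤ 1 := by
    calc ‖((bernoulli n : ℚ) : ℚ_[p])‖ * (p:ℝ)⁻¹
        = ‖((bernoulli n * p : ℚ) : ℚ_[p])‖ := by
          rw [Rat.cast_mul, norm_mul]
          push_cast
          rw [Padic.norm_p]
      _ ≤ 1 := hnorm1
  rw [zpow_one]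
  calc ‖((bernoulli n : ℚ) : ℚ_[p])‖ = (‖((bernoulli n : ℚ) : ℚ_[p])‖ * (p:ℝ)⁻¹) * p := by
        field_simp
    _ ≤ 1 * p := by
        apply mul_le_mul_of_nonneg_right hfin hppos.le
    _ = p := one_mul _
end

lemma bernoulli_odd_zero {i : ℕ} (h : Odd i) (hi : 3 ≤ i) : bernoulli i = 0 := by
  rw [bernoulli_eq_bernoulli'_of_ne_one (by omega)]
  exact bernoulli'_eq_zero_of_odd h (by omega)

lemma dvd_den_of_norm_gt_one (p : ℕ) [Fact p.Prime] (q : ℚ) (h : 1 < ‖(q : ℚ_[p])‖) :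
    p ∣ q.den := by
  by_contra hnd
  exact absurd (Padic.norm_rat_le_one hnd) (not_le.mpr h)

lemma dvd_den_bernoulli (p k : ℕ) [hp : Fact p.Prime] (hp23 : p = 2 ∨ p = 3)
    (hk : 0 < k) (hke : Even k) : p ∣ (bernoulli k).den := by
  have hp2 : 2 ≤ p := hp.out.two_le
  have hppos : (0:ℝ) < p := by exact_mod_cast (by omega : 0 < p)
  have hk2 : 2 ≤ k := by
    rcases hke with ⟨c, hc⟩; omega
  -- the integer sum
  set Sn : ℕ := ∑ i ∈ range p, i ^ k with hSn
  have hScast : (∑ i ∈ range p, (i:ℚ)^k) = ((Sn : ℤ) : ℚ) := by push_cast [hSn]; ring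
  have hSd : ¬ (p:ℤ) ∣ (Sn : ℤ) := by
    have : ¬ p ∣ Sn := by
      rcases hp23 with rfl | rfl
      · have : Sn = 1 := by
          simp [hSn, Finset.sum_range_succ, Nat.zero_pow hk]
        omega
      · have h2 : Sn = 1 + 2 ^ k := by
          simp [hSn, Finset.sum_range_succ, Nat.zero_pow hk]
        obtain ⟨c, hc⟩ := hke
        have hmod : ∀ c : ℕ, 2 ^ c % 3 = 1 ∨ 2 ^ c % 3 = 2 := by
          intro c
          induction c with
          | zero => left; rfl
          | succ n ih =>
            rw [pow_succ, Nat.mul_mod]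
            rcases ih with h | h <;> rw [h] <;> simp
        have hmod := hmod c
        have : (2:ℕ) ^ k % 3 = 1 := by
          rw [hc, pow_add, Nat.mul_mod]
          rcases hmod with h | h <;> rw [h] <;> simp
        omega
    exact_mod_cast this
  have hSnorm : ‖((Sn : ℤ) : ℚ_[p])‖ = 1 := by
    refine le_antisymm (Padic.norm_int_le_one _) ?_
    by_contra hlt
    exact hSd (Padic.norm_intCast_lt_one_iff.mp (not_le.mp hlt))
  -- the remainder sum
  set R : ℚ := ∑ i ∈ range k, bernoulli i * (k.choose i) * (p:ℚ)^(k+1-i) / ((k+1-i : ℕ) : ℚ) with hR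
  have hRnorm : ‖((R : ℚ) : ℚ_[p])‖ ≤ (p:ℝ) ^ (-(1:ℕ):ℤ) := by
    rw [hR, Rat.cast_sum]
    apply padic_norm_sum_le _ _ (le_of_lt (zpow_pos hppos _))
    intro i hi
    have hiltk : i < k := mem_range.mp hi
    set j := k + 1 - i with hj
    have hjpos : 0 < j := by omega
    rcases Nat.even_or_odd i with hie | hio
    · -- i even : i = 0 or i ≥ 2
      rcases Nat.eq_zero_or_pos i with rfl | hipos
      · -- i = 0
        have hb := norm_term_le p (bernoulli 0) (k.choose 0) j p hjpos 0 1
          (by simp) (by rw [← norm_p_zpow p])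
        refine le_trans hb (pz hp2 ?_)
        have hdvd : p ^ padicValNat p j ≤ j := Nat.le_of_dvd hjpos pow_padicValNat_dvd
        have := h2t p (padicValNat p j) hp2
        omega
      · -- i even ≥ 2, j odd ≥ 3
        have hi2 : 2 ≤ i := by
          rcases hie with ⟨c, hc⟩; omega
        have hile : i ≤ k - 2 := by
          rcases hie with ⟨c, hc⟩; rcases hke with ⟨d, hd⟩; omega
        have hj3 : 3 ≤ j := by omega
        have hjodd : ¬ 2 ∣ j := by
          rcases hke with ⟨d, hd⟩; rcases hie with ⟨c, hc⟩; omega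
        have hb := norm_term_le p (bernoulli i) (k.choose i) j p hjpos 1 1
          (norm_bernoulli_le p i) (by rw [← norm_p_zpow p])
        refine le_trans hb (pz hp2 ?_)
        set t := padicValNat p j with ht
        have hdvd : p ^ t ≤ j := Nat.le_of_dvd hjpos pow_padicValNat_dvd
        have htj : t ≤ j - 2 := by
          rcases hp23 with rfl | rfl
          · have : t = 0 := padicValNat.eq_zero_of_not_dvd (by
              intro hdd; exact hjodd hdd)
            omega
          · rcases Nat.eq_zero_or_pos t with h0 | h1
            · omega
            · have := h3t t h1; omega
        omega
    · -- i odd : i = 1 or i ≥ 3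
      rcases Nat.lt_or_ge i 3 with hi3 | hi3
      · have hi1 : i = 1 := by rcases hio with ⟨c, hc⟩; omega
        subst hi1
        have heq : bernoulli 1 * ((k.choose 1 : ℕ):ℚ) * (p:ℚ)^(k+1-1) / ((k+1-1 : ℕ) : ℚ)
            = bernoulli 1 * (p:ℚ)^k := by
          rw [Nat.choose_one_right, Nat.add_sub_cancel]
          have hk0 : ((k:ℕ):ℚ) ≠ 0 := by exact_mod_cast hk.ne'
          field_simp
        rw [heq]
        have : ‖((bernoulli 1 * (p:ℚ)^k : ℚ) : ℚ_[p])‖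
            = ‖((bernoulli 1 : ℚ) : ℚ_[p])‖ * ‖(p : ℚ_[p])‖ ^ k := by
          push_cast
          rw [norm_mul, norm_pow]
        rw [this, norm_p_zpow p]
        calc ‖((bernoulli 1 : ℚ) : ℚ_[p])‖ * ((p:ℝ) ^ (-(1:ℕ):ℤ)) ^ k
            ≤ (p:ℝ)^(1:ℤ) * ((p:ℝ) ^ (-(1:ℕ):ℤ)) ^ k := by
              apply mul_le_mul_of_nonneg_right (norm_bernoulli_le p 1)
              positivity
          _ = (p:ℝ) ^ ((1:ℤ) - k) := by
              rw [← zpow_natCast ((p:ℝ) ^ (-(1:ℕ):ℤ)) k, ← zpow_mul, ← zpow_add₀ hppos.ne']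
              congr 1; push_cast; ring
          _ ≤ (p:ℝ) ^ (-(1:ℕ):ℤ) := pz hp2 (by push_cast; omega)
      · rw [bernoulli_odd_zero hio hi3]
        simp only [zero_mul, zero_div, Rat.cast_zero, norm_zero]
        positivity
  -- conclude
  have hrearr : (bernoulli k * p : ℚ) = ((Sn : ℤ) : ℚ) - R := by
    rw [← hScast, faulhaber'' k p, hR]; ring
  have hp1 : (1:ℝ) < p := by exact_mod_cast (by omega : 1 < p)
  have hRlt : ‖((R : ℚ) : ℚ_[p])‖ < 1 := by
    refine lt_of_le_of_lt hRnorm ?_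
    have : (p:ℝ) ^ (-(1:ℕ):ℤ) = (p:ℝ)⁻¹ := by
      norm_num
    rw [this]
    rw [inv_lt_one_iff₀]
    right; exact hp1
  have hmax : ‖((bernoulli k * p : ℚ) : ℚ_[p])‖ = 1 := by
    rw [hrearr, Rat.cast_sub, sub_eq_add_neg]
    have hc : (((Sn : ℤ) : ℚ) : ℚ_[p]) = ((Sn : ℤ) : ℚ_[p]) := by push_cast; ring
    have hne : ‖((Sn : ℤ) : ℚ_[p])‖ ≠ ‖(-((R:ℚ) : ℚ_[p]) : ℚ_[p])‖ := by
      rw [hSnorm, norm_neg]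
      exact (ne_of_lt hRlt).symm
    rw [hc, Padic.add_eq_max_of_ne hne, hSnorm, norm_neg]
    exact max_eq_left hRlt.le
  have hfin : ‖((bernoulli k : ℚ) : ℚ_[p])‖ = p := by
    have hcc : ((bernoulli k * p : ℚ) : ℚ_[p]) = ((bernoulli k : ℚ) : ℚ_[p]) * (p:ℚ_[p]) := by
      push_cast; ring
    rw [hcc, norm_mul, Padic.norm_p] at hmax
    have hpne : (p:ℝ) ≠ 0 := hppos.ne'
    rw [inv_eq_one_div, mul_one_div, div_eq_one_iff_eq hpne] at hmax
    exact hmax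
  apply dvd_den_of_norm_gt_one p
  rw [hfin]
  exact hp1

lemma combine_primes (m : ℕ) (z : ℤ) (hm : 0 < m)
    (h : ∀ p : ℕ, p.Prime → p ∣ m → (p:ℤ) ^ (2 * padicValNat p m) ∣ z) :
    (m:ℤ) ^ 2 ∣ z := by
  rcases eq_or_ne z 0 with rfl | hz
  · exact dvd_zero _
  have h2 : m ^ 2 ∣ z.natAbs := by
    rw [← Nat.factorization_le_iff_dvd (pow_ne_zero 2 hm.ne') (Int.natAbs_ne_zero.mpr hz)]
    rw [Finsupp.le_iff]
    intro q hq
    have hqp : q.Prime := Nat.prime_of_mem_primeFactors ((Nat.support_factorization _) ▸ hq)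
    have hqm : q ∣ m := by
      have : q ∣ m ^ 2 := Nat.dvd_of_mem_primeFactors ((Nat.support_factorization _) ▸ hq)
      exact hqp.dvd_of_dvd_pow this
    haveI : Fact q.Prime := ⟨hqp⟩
    have hval : (m ^ 2).factorization q = 2 * padicValNat q m := by
      rw [Nat.factorization_pow]
      simp [Nat.factorization_def m hqp, mul_comm]
    rw [hval]
    have hdvd := h q hqp hqm
    have : (q : ℤ) ^ (2 * padicValNat q m) = ((q ^ (2 * padicValNat q m) : ℕ) : ℤ) := by push_cast; ring
    rw [this] at hdvd
    have hnat : q ^ (2 * padicValNat q m) ∣ z.natAbs := Int.natCast_dvd_natCast.mp (Int.dvd_natAbs.mpr hdvd)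
    exact (Nat.Prime.pow_dvd_iff_le_factorization hqp (Int.natAbs_ne_zero.mpr hz)).mp hnat
  have h3 : ((m ^ 2 : ℕ) : ℤ) ∣ (z.natAbs : ℤ) := Int.natCast_dvd_natCast.mpr h2
  have h4 : ((m ^ 2 : ℕ) : ℤ) ∣ z := (Int.dvd_natAbs).mp h3
  exact_mod_cast h4


def S (k m : ℕ) : ℕ := ∑ j ∈ Finset.Ico 1 m, j ^ k

lemma S_cast (k m : ℕ) (hk : 0 < k) (hm : 0 < m) :
    ((S k m : ℕ) : ℚ) = ∑ i ∈ range m, (i:ℚ)^k := by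
  have hsplit : ∑ i ∈ Finset.Ico (0:ℕ) 1, (i:ℚ)^k + ∑ i ∈ Finset.Ico (1:ℕ) m, (i:ℚ)^k
      = ∑ i ∈ Finset.Ico (0:ℕ) m, (i:ℚ)^k :=
    Finset.sum_Ico_consecutive _ (Nat.zero_le 1) hm
  have h0 : ∑ i ∈ Finset.Ico (0:ℕ) 1, (i:ℚ)^k = 0 := by
    simp [zero_pow hk.ne']
  rw [Finset.range_eq_Ico, ← hsplit, h0, zero_add, S]
  push_cast
  ring

lemma core_congruence (k m : ℕ) (hk : 0 < k) (hke : Even k) (hm : 0 < m) :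
    (m:ℤ) ^ 2 ∣ (((bernoulli k).den : ℤ) * (S k m : ℤ) - (bernoulli k).num * m) := by
  have hk2 : 2 ≤ k := by rcases hke with ⟨c, hc⟩; omega
  set D : ℕ := (bernoulli k).den with hD
  set N : ℤ := (bernoulli k).num with hN
  have hD2 : 2 ∣ D := dvd_den_bernoulli 2 k (Or.inl rfl) hk hke
  have hD3 : 3 ∣ D := dvd_den_bernoulli 3 k (Or.inr rfl) hk hke
  have hDQ0 : ((D:ℕ):ℚ) ≠ 0 := by
    rw [hD]; exact_mod_cast (bernoulli k).den_nz
  have hNum : (N : ℚ) = bernoulli k * D := by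
    rw [eq_comm, ← Rat.num_div_den (bernoulli k), hN, hD]
    field_simp
  have hZQ : (((D : ℤ) * (S k m : ℤ) - N * m : ℤ) : ℚ)
      = ∑ i ∈ range k, ((D:ℚ) * bernoulli i) * (k.choose i) * (m:ℚ)^(k+1-i) / ((k+1-i : ℕ) : ℚ) := by
    have hfold : ∑ i ∈ range k, ((D:ℚ) * bernoulli i) * (k.choose i) * (m:ℚ)^(k+1-i) / ((k+1-i : ℕ) : ℚ)
        = (D:ℚ) * ∑ i ∈ range k, bernoulli i * (k.choose i) * (m:ℚ)^(k+1-i) / ((k+1-i : ℕ) : ℚ) := by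
      rw [Finset.mul_sum]
      exact Finset.sum_congr rfl (fun i _ => by ring)
    rw [hfold]
    push_cast
    rw [S_cast k m hk hm, faulhaber'' k m]
    rw [show ((N:ℤ):ℚ) = bernoulli k * D from by exact_mod_cast hNum]
    ring
  apply combine_primes m _ hm
  intro p hpp hpm
  haveI : Fact p.Prime := ⟨hpp⟩
  have hp2 : 2 ≤ p := hpp.two_le
  have hppos : (0:ℝ) < p := by exact_mod_cast (by omega : 0 < p)
  set a := padicValNat p m with ha
  have ha1 : 1 ≤ a := one_le_padicValNat_of_dvd hm.ne' hpm
  have key : ‖((((D : ℤ) * (S k m : ℤ) - N * m : ℤ)) : ℚ_[p])‖ ≤ (p:ℝ) ^ (-(2 * a : ℕ) : ℤ) := by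
    have hcast : ((((D : ℤ) * (S k m : ℤ) - N * m : ℤ)) : ℚ_[p])
        = ((((D : ℤ) * (S k m : ℤ) - N * m : ℤ) : ℚ) : ℚ_[p]) := by push_cast; ring
    rw [hcast, hZQ, Rat.cast_sum]
    apply padic_norm_sum_le _ _ (le_of_lt (zpow_pos hppos _))
    intro i hi
    have hiltk : i < k := mem_range.mp hi
    set j := k + 1 - i with hj
    have hjpos : 0 < j := by omega
    -- norm of m
    have hM : ‖((m : ℕ) : ℚ_[p])‖ ≤ (p:ℝ) ^ (-(a:ℤ)) := by
      have hdvd : ((p:ℤ)) ^ a ∣ (m:ℤ) := by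
        exact_mod_cast Int.natCast_dvd_natCast.mpr (pow_padicValNat_dvd)
      have := (Padic.norm_int_le_pow_iff_dvd (m:ℤ) a).mpr hdvd
      have hcc : ((m:ℕ) : ℚ_[p]) = ((m:ℤ) : ℚ_[p]) := by push_cast; ring
      rw [hcc]
      exact_mod_cast this
    have hDle : ‖((D:ℚ) : ℚ_[p])‖ ≤ 1 := by
      have : ((D:ℚ) : ℚ_[p]) = ((D:ℤ) : ℚ_[p]) := by push_cast; ring
      rw [this]; exact Padic.norm_int_le_one _
    rcases Nat.even_or_odd i with hie | hio
    · rcases Nat.eq_zero_or_pos i with rfl | hipos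
      · -- i = 0 : b = D
        have hB : ‖(((D:ℚ) * bernoulli 0 : ℚ) : ℚ_[p])‖ ≤ (p:ℝ) ^ (0:ℤ) := by
          simpa using hDle
        refine le_trans (norm_term_le p _ _ j m hjpos 0 a hB hM) (pz hp2 ?_)
        set t := padicValNat p j with ht
        have hdt : p ^ t ≤ j := Nat.le_of_dvd hjpos pow_padicValNat_dvd
        have hta : t ≤ (k-1) * a := by
          have h1 : t ≤ k - 1 := by
            rcases Nat.eq_zero_or_pos t with h0 | h1
            · omega
            · rcases (by omega : p = 2 ∨ 3 ≤ p) with rfl | h3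
              · have ht0 : t = 0 := by
                  rw [ht]
                  apply padicValNat.eq_zero_of_not_dvd
                  rcases hke with ⟨d, hd⟩
                  omega
                omega
              · have hh := h3t t h1
                have h32 : 3^t ≤ p^t := Nat.pow_le_pow_left h3 t
                omega
          calc t ≤ k - 1 := h1
            _ ≤ (k-1) * a := Nat.le_mul_of_pos_right _ (by omega)
        have hsplit : (k-1) * a + 2 * a = (k+1-0) * a := by
          rw [← Nat.add_mul]; congr 1; omega
        have hfin : t + 2 * a ≤ j * a := by
          have h2 := Nat.add_le_add_right hta (2*a)
          rw [hsplit] at h2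
          rw [hj]
          exact h2
        have hfinz : (t:ℤ) + 2*(a:ℤ) ≤ (j:ℤ)*(a:ℤ) := by exact_mod_cast hfin
        have h2a : ((2*a : ℕ):ℤ) = 2*(a:ℤ) := by push_cast; ring
        linarith [hfinz, h2a]
      · -- i even ≥ 2
        have hi2 : 2 ≤ i := by rcases hie with ⟨c, hc⟩; omega
        have hile : i ≤ k - 2 := by
          rcases hie with ⟨c, hc⟩; rcases hke with ⟨d, hd⟩; omega
        have hj3 : 3 ≤ j := by omega
        have hjodd : ¬ 2 ∣ j := by
          rcases hke with ⟨d, hd⟩; rcases hie with ⟨c, hc⟩; omega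
        set t := padicValNat p j with ht
        have hdt : p ^ t ≤ j := Nat.le_of_dvd hjpos pow_padicValNat_dvd
        have hp4 : p ≠ 4 := fun h => by rw [h] at hpp; norm_num at hpp
        rcases (by omega : p = 2 ∨ p = 3 ∨ 5 ≤ p) with rfl | h35
        · -- p = 2
          have hDn : ‖((D:ℚ) : ℚ_[2])‖ ≤ (2:ℝ) ^ (-(1:ℕ):ℤ) := by
            have hdd : ((2:ℤ)) ^ (1:ℕ) ∣ (D:ℤ) := by
              exact_mod_cast Int.natCast_dvd_natCast.mpr (by simpa using hD2)
            have := (Padic.norm_int_le_pow_iff_dvd (D:ℤ) 1).mpr hdd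
            have hcc : ((D:ℚ) : ℚ_[2]) = ((D:ℤ) : ℚ_[2]) := by push_cast; ring
            rw [hcc]; exact_mod_cast this
          have hB : ‖(((D:ℚ) * bernoulli i : ℚ) : ℚ_[2])‖ ≤ (2:ℝ) ^ (0:ℤ) := by
            rw [Rat.cast_mul, norm_mul]
            calc ‖((D:ℚ) : ℚ_[2])‖ * ‖((bernoulli i : ℚ) : ℚ_[2])‖
                ≤ (2:ℝ) ^ (-(1:ℕ):ℤ) * (2:ℝ) ^ (1:ℤ) := by
                  apply mul_le_mul hDn (norm_bernoulli_le 2 i) (norm_nonneg _)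
                  positivity
              _ = (2:ℝ) ^ (0:ℤ) := by rw [← zpow_add₀ (by norm_num : (2:ℝ) ≠ 0)]; norm_num
          refine le_trans (norm_term_le 2 _ _ j m hjpos 0 a hB hM) (pz (le_refl 2) ?_)
          have ht0 : t = 0 := padicValNat.eq_zero_of_not_dvd hjodd
          have hfin : t + 2 * a ≤ j * a := by
            have h2 : 2 * a ≤ j * a := Nat.mul_le_mul_right a (by omega)
            omega
          have hfinz : (t:ℤ) + 2*(a:ℤ) ≤ (j:ℤ)*(a:ℤ) := by exact_mod_cast hfin
          have h2a : ((2*a : ℕ):ℤ) = 2*(a:ℤ) := by push_cast; ring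
          linarith [hfinz, h2a]
        · rcases h35 with rfl | h5
          · -- p = 3
            have hDn : ‖((D:ℚ) : ℚ_[3])‖ ≤ (3:ℝ) ^ (-(1:ℕ):ℤ) := by
              have hdd : ((3:ℤ)) ^ (1:ℕ) ∣ (D:ℤ) := by
                exact_mod_cast Int.natCast_dvd_natCast.mpr (by simpa using hD3)
              have := (Padic.norm_int_le_pow_iff_dvd (D:ℤ) 1).mpr hdd
              have hcc : ((D:ℚ) : ℚ_[3]) = ((D:ℤ) : ℚ_[3]) := by push_cast; ring
              rw [hcc]; exact_mod_cast this
            have hB : ‖(((D:ℚ) * bernoulli i : ℚ) : ℚ_[3])‖ ≤ (3:ℝ) ^ (0:ℤ) := by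
              rw [Rat.cast_mul, norm_mul]
              calc ‖((D:ℚ) : ℚ_[3])‖ * ‖((bernoulli i : ℚ) : ℚ_[3])‖
                  ≤ (3:ℝ) ^ (-(1:ℕ):ℤ) * (3:ℝ) ^ (1:ℤ) := by
                    apply mul_le_mul hDn (norm_bernoulli_le 3 i) (norm_nonneg _)
                    positivity
                _ = (3:ℝ) ^ (0:ℤ) := by rw [← zpow_add₀ (by norm_num : (3:ℝ) ≠ 0)]; norm_num
            refine le_trans (norm_term_le 3 _ _ j m hjpos 0 a hB hM) (pz (by norm_num) ?_)
            have h1 : t ≤ j - 2 := by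
              rcases Nat.eq_zero_or_pos t with h0 | h1
              · omega
              · have := h3t t h1; omega
            have hta : t ≤ (j-2)*a := le_trans h1 (Nat.le_mul_of_pos_right _ (by omega))
            have hsplit : (j-2)*a + 2*a = j*a := by rw [← Nat.add_mul]; congr 1; omega
            have hfin : t + 2 * a ≤ j * a := by
              have h2 := Nat.add_le_add_right hta (2*a)
              rw [hsplit] at h2; exact h2
            have hfinz : (t:ℤ) + 2*(a:ℤ) ≤ (j:ℤ)*(a:ℤ) := by exact_mod_cast hfin
            have h2a : ((2*a : ℕ):ℤ) = 2*(a:ℤ) := by push_cast; ring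
            linarith [hfinz, h2a]
          · -- p ≥ 5
            have hB : ‖(((D:ℚ) * bernoulli i : ℚ) : ℚ_[p])‖ ≤ (p:ℝ) ^ (1:ℤ) := by
              rw [Rat.cast_mul, norm_mul]
              calc ‖((D:ℚ) : ℚ_[p])‖ * ‖((bernoulli i : ℚ) : ℚ_[p])‖
                  ≤ 1 * (p:ℝ) ^ (1:ℤ) := by
                    apply mul_le_mul hDle (norm_bernoulli_le p i) (norm_nonneg _)
                    norm_num
                _ = (p:ℝ) ^ (1:ℤ) := one_mul _
            refine le_trans (norm_term_le p _ _ j m hjpos 1 a hB hM) (pz hp2 ?_)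
            have h1 : t + 3 ≤ j := by
              rcases Nat.eq_zero_or_pos t with h0 | h1
              · omega
              · have h51 := h5t t h1
                have h52 : 5^t ≤ p^t := Nat.pow_le_pow_left h5 t
                omega
            have hta : t + 1 ≤ (j-2)*a := le_trans (by omega) (Nat.le_mul_of_pos_right _ (by omega))
            have hsplit : (j-2)*a + 2*a = j*a := by rw [← Nat.add_mul]; congr 1; omega
            have hfin : t + 1 + 2 * a ≤ j * a := by
              have h2 := Nat.add_le_add_right hta (2*a)
              rw [hsplit] at h2; exact h2
            have hfinz : (t:ℤ) + 1 + 2*(a:ℤ) ≤ (j:ℤ)*(a:ℤ) := by exact_mod_cast hfin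
            have h2a : ((2*a : ℕ):ℤ) = 2*(a:ℤ) := by push_cast; ring
            linarith [hfinz, h2a]
    · rcases Nat.lt_or_ge i 3 with hi3 | hi3
      · -- i = 1
        have hi1 : i = 1 := by rcases hio with ⟨c, hc⟩; omega
        subst hi1
        obtain ⟨d, hd⟩ := hD2
        have heq : ((D:ℚ) * bernoulli 1) * ((k.choose 1 : ℕ):ℚ) * (m:ℚ)^(k+1-1) / ((k+1-1 : ℕ) : ℚ)
            = (-(d:ℚ)) * (m:ℚ)^k := by
          rw [Nat.choose_one_right, Nat.add_sub_cancel, bernoulli_one, hd]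
          have hk0 : ((k:ℕ):ℚ) ≠ 0 := by exact_mod_cast hk.ne'
          push_cast
          field_simp
        rw [heq]
        have hcc : (((-(d:ℚ)) * (m:ℚ)^k : ℚ) : ℚ_[p]) = ((-(d:ℤ)) : ℚ_[p]) * (((m:ℕ)) : ℚ_[p])^k := by
          push_cast; ring
        rw [hcc, norm_mul, norm_pow]
        calc ‖((-(d:ℤ)) : ℚ_[p])‖ * ‖((m:ℕ) : ℚ_[p])‖ ^ k
            ≤ 1 * ((p:ℝ) ^ (-(a:ℤ))) ^ k := by
              apply mul_le_mul (Padic.norm_int_le_one _)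
                (pow_le_pow_left₀ (norm_nonneg _) hM k) (by positivity) (by norm_num)
          _ = (p:ℝ) ^ ((-(a:ℤ)) * k) := by
              rw [one_mul, ← zpow_natCast ((p:ℝ) ^ (-(a:ℤ))) k, ← zpow_mul]
          _ ≤ (p:ℝ) ^ (-(2*a : ℕ) : ℤ) := by
              apply pz hp2
              have hfin : 2 * a ≤ a * k := by
                calc 2 * a = a * 2 := by ring
                  _ ≤ a * k := Nat.mul_le_mul_left a hk2
              have hfinz : 2*(a:ℤ) ≤ (a:ℤ)*(k:ℤ) := by exact_mod_cast hfin
              have h2a : ((2*a : ℕ):ℤ) = 2*(a:ℤ) := by push_cast; ring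
              linarith [hfinz, h2a]
      · -- i odd ≥ 3
        rw [bernoulli_odd_zero hio hi3]
        simp only [mul_zero, zero_mul, zero_div, Rat.cast_zero, norm_zero]
        positivity
  rw [← Padic.norm_int_le_pow_iff_dvd]
  exact_mod_cast key


theorem sq_dvd_S_iff_dvd_num (k m : ℕ) (hk : 0 < k) (hke : Even k) (hm : 0 < m) :
    m ^ 2 ∣ S k m ↔ (m : ℤ) ∣ (bernoulli k).num := by
  have hcore := core_congruence k m hk hke hm
  set D : ℕ := (bernoulli k).den with hD
  set N : ℤ := (bernoulli k).num with hN
  have hm0 : (m:ℤ) ≠ 0 := by exact_mod_cast hm.ne'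
  constructor
  · intro h
    have h1 : (m:ℤ)^2 ∣ (D:ℤ) * (S k m : ℤ) := by
      apply Dvd.dvd.mul_left
      have : ((m^2 : ℕ) : ℤ) ∣ ((S k m : ℕ) : ℤ) := Int.natCast_dvd_natCast.mpr h
      exact_mod_cast this
    have h2 : (m:ℤ)^2 ∣ N * m := by
      have heq : N * (m:ℤ) = (D:ℤ) * (S k m : ℤ) - ((D:ℤ) * (S k m : ℤ) - N * m) := by ring
      rw [heq]
      exact dvd_sub h1 hcore
    have h3 : (m:ℤ) * m ∣ N * m := by rw [← sq]; exact h2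
    exact (mul_dvd_mul_iff_right hm0).mp h3
  · intro h
    have h2 : (m:ℤ)^2 ∣ N * m := by
      obtain ⟨c, hc⟩ := h
      exact ⟨c, by rw [hc]; ring⟩
    have h1 : (m:ℤ)^2 ∣ (D:ℤ) * (S k m : ℤ) := by
      have heq : (D:ℤ) * (S k m : ℤ) = ((D:ℤ) * (S k m : ℤ) - N * m) + N * m := by ring
      rw [heq]
      exact dvd_add hcore h2
    have hcop : Nat.Coprime m D := by
      by_contra hnc
      obtain ⟨q, hqp, hqm, hqD⟩ := Nat.Prime.not_coprime_iff_dvd.mp hnc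
      have hqN : (q:ℤ) ∣ N := dvd_trans (Int.natCast_dvd_natCast.mpr hqm) h
      have hqNabs : q ∣ N.natAbs := Int.natCast_dvd_natCast.mp (Int.dvd_natAbs.mpr hqN)
      have hred : N.natAbs.Coprime D := (bernoulli k).reduced
      have hq1 : q ∣ Nat.gcd N.natAbs D := Nat.dvd_gcd hqNabs hqD
      rw [hred] at hq1
      exact hqp.one_lt.ne' (Nat.dvd_one.mp hq1)
    have h1n : m^2 ∣ D * S k m := by exact_mod_cast h1
    exact (Nat.Coprime.pow_left 2 hcop).dvd_of_dvd_mul_left h1n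
end

section
/- For even k ∈ {2, 4, 6, 8}, the numerator of B_k has absolute value 1, and for every integer m ≥ 2, gcd(S_k(m), m^k) ≤ m; moreover gcd(S_k(m), m^k) = m whenever gcd(m, denom(B_k)) = 1. -/
open Finset

theorem b5' : bernoulli' 5 = 0 := by
  rw [bernoulli'_def]; norm_num [sum_range_succ, Nat.choose]
theorem b6' : bernoulli' 6 = 1/42 := by
  rw [bernoulli'_def]; norm_num [sum_range_succ, b5', Nat.choose]
theorem b7' : bernoulli' 7 = 0 := by
  rw [bernoulli'_def]; norm_num [sum_range_succ, b5', b6', Nat.choose]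
theorem b8' : bernoulli' 8 = -1/30 := by
  rw [bernoulli'_def]; norm_num [sum_range_succ, b5', b6', b7', Nat.choose]

theorem bern2 : bernoulli 2 = 1/6 := by
  rw [bernoulli_eq_bernoulli'_of_ne_one (by norm_num), bernoulli'_two]
theorem bern4 : bernoulli 4 = -1/30 := by
  rw [bernoulli_eq_bernoulli'_of_ne_one (by norm_num), bernoulli'_four]
theorem bern6 : bernoulli 6 = 1/42 := by
  rw [bernoulli_eq_bernoulli'_of_ne_one (by norm_num), b6']
theorem bern8 : bernoulli 8 = -1/30 := by
  rw [bernoulli_eq_bernoulli'_of_ne_one (by norm_num), b8']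

theorem S_succ (k n : ℕ) (hk : 0 < k) : S k (n+1) = S k n + n ^ k := by
  rcases n with _ | j
  · simp [S, zero_pow hk.ne']
  · rw [S, S, Finset.sum_Ico_succ_top (by omega)]

theorem id2 (m : ℕ) : (6:ℤ) * S 2 m = m * (1 + m * (2*m - 3)) := by
  induction m with
  | zero => simp [S]
  | succ n ih =>
    rw [S_succ 2 n (by norm_num)]
    push_cast
    linear_combination ih

theorem id4 (m : ℕ) : (30:ℤ) * S 4 m = m * (-1 + m * (6*m^3 - 15*m^2 + 10*m)) := by
  induction m with
  | zero => simp [S]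
  | succ n ih =>
    rw [S_succ 4 n (by norm_num)]
    push_cast
    linear_combination ih

theorem id6 (m : ℕ) : (42:ℤ) * S 6 m = m * (1 + m * (6*m^5 - 21*m^4 + 21*m^3 - 7*m)) := by
  induction m with
  | zero => simp [S]
  | succ n ih =>
    rw [S_succ 6 n (by norm_num)]
    push_cast
    linear_combination ih

theorem id90 (m : ℕ) : (90:ℤ) * S 8 m =
    m * (-3 + m * (10*m^7 - 45*m^6 + 60*m^5 - 42*m^3 + 20*m)) := by
  induction m with
  | zero => simp [S]
  | succ n ih =>
    rw [S_succ 8 n (by norm_num)]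
    push_cast
    linear_combination ih

theorem id8 (m : ℕ) : ∃ q : ℤ, (30:ℤ) * S 8 m = m * (-1 + m * q) := by
  have h3 : (3:ℤ) ∣ (10*(m:ℤ)^7 - 45*(m:ℤ)^6 + 60*(m:ℤ)^5 - 42*(m:ℤ)^3 + 20*(m:ℤ)) := by
    have := (ZMod.intCast_zmod_eq_zero_iff_dvd
      (10*(m:ℤ)^7 - 45*(m:ℤ)^6 + 60*(m:ℤ)^5 - 42*(m:ℤ)^3 + 20*(m:ℤ)) 3).mp
    apply (ZMod.intCast_zmod_eq_zero_iff_dvd _ 3).mp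
    push_cast
    have : ∀ a : ZMod 3, 10*a^7 - 45*a^6 + 60*a^5 - 42*a^3 + 20*a = 0 := by decide
    exact this _
  obtain ⟨s, hs⟩ := h3
  refine ⟨s, ?_⟩
  have h90 := id90 m
  have h3' : (3:ℤ) * ((30:ℤ) * S 8 m) = 3 * ((m:ℤ) * (-1 + m * s)) := by
    linear_combination h90 + (m:ℤ)^2 * hs
  exact mul_left_cancel₀ (by norm_num) h3'

theorem keyA (k m D : ℕ) (e q : ℤ) (he : e = 1 ∨ e = -1) (hk : 0 < k)
    (hm : 2 ≤ m) (h : (D:ℤ) * (S k m : ℤ) = m * (e + m * q)) :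
    Nat.gcd (S k m) (m ^ k) ≤ m ∧ (Nat.gcd m D = 1 → Nat.gcd (S k m) (m ^ k) = m) := by
  set g := Nat.gcd (S k m) (m ^ k) with hg
  have hgS : (g:ℤ) ∣ (S k m : ℤ) := Int.natCast_dvd_natCast.mpr (Nat.gcd_dvd_left _ _)
  have hgmk : (g:ℤ) ∣ (m:ℤ) ^ k := by
    exact_mod_cast Int.natCast_dvd_natCast.mpr (Nat.gcd_dvd_right _ _)
  have hme : IsCoprime (m:ℤ) e := by
    rcases he with rfl | rfl
    · exact isCoprime_one_right
    · exact isCoprime_one_right.neg_right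
  have hcop : IsCoprime ((g:ℤ)) (e + m * q) := by
    have h1 : IsCoprime ((m:ℤ)) (e + m * q) := by
      have := hme.add_mul_left_right q
      exact this
    have h2 : IsCoprime ((m:ℤ)^k) (e + m * q) := h1.pow_left
    exact h2.of_isCoprime_of_dvd_left hgmk
  have hdvd : (g:ℤ) ∣ (m:ℤ) * (e + m * q) := by
    rw [← h]; exact hgS.mul_left _
  have hgm : (g:ℤ) ∣ (m:ℤ) := hcop.dvd_of_dvd_mul_right hdvd
  have hgm' : g ∣ m := Int.natCast_dvd_natCast.mp hgm
  constructor
  · exact Nat.le_of_dvd (by omega) hgm'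
  · intro hcd
    have hmD : IsCoprime ((m:ℤ)) ((D:ℤ)) := Nat.isCoprime_iff_coprime.mpr hcd
    have hmS : (m:ℤ) ∣ (D:ℤ) * (S k m : ℤ) := by
      rw [h]; exact Dvd.intro _ rfl
    have hmS' : (m:ℤ) ∣ (S k m : ℤ) := hmD.dvd_of_dvd_mul_left hmS
    have hmS'' : m ∣ S k m := Int.natCast_dvd_natCast.mp hmS'
    have hmg : m ∣ g := Nat.dvd_gcd hmS'' (dvd_pow_self m hk.ne')
    exact Nat.dvd_antisymm hgm' hmg

theorem max_g_eq_one_for_small_k (k : ℕ) (hk : k ∈ ({2, 4, 6, 8} : Finset ℕ)) :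
    (bernoulli k).num.natAbs = 1 ∧
      ∀ m : ℕ, 2 ≤ m →
        Nat.gcd (S k m) (m ^ k) ≤ m ∧
          (Nat.gcd m (bernoulli k).den = 1 → Nat.gcd (S k m) (m ^ k) = m) := by
  fin_cases hk
  · refine ⟨by rw [bern2]; norm_num, fun m hm => ?_⟩
    have hden : (bernoulli 2).den = 6 := by rw [bern2]; norm_num [Rat.div_def]
    rw [hden]
    exact keyA 2 m 6 1 (2*(m:ℤ) - 3) (Or.inl rfl) (by norm_num) hm (id2 m)
  · refine ⟨by rw [bern4]; norm_num, fun m hm => ?_⟩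
    have hden : (bernoulli 4).den = 30 := by rw [bern4]; norm_num [Rat.div_def]
    rw [hden]
    exact keyA 4 m 30 (-1) _ (Or.inr rfl) (by norm_num) hm (id4 m)
  · refine ⟨by rw [bern6]; norm_num, fun m hm => ?_⟩
    have hden : (bernoulli 6).den = 42 := by rw [bern6]; norm_num [Rat.div_def]
    rw [hden]
    exact keyA 6 m 42 1 _ (Or.inl rfl) (by norm_num) hm (id6 m)
  · refine ⟨by rw [bern8]; norm_num, fun m hm => ?_⟩
    have hden : (bernoulli 8).den = 30 := by rw [bern8]; norm_num [Rat.div_def]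
    rw [hden]
    obtain ⟨q, hq⟩ := id8 m
    exact keyA 8 m 30 (-1) q (Or.inr rfl) (by norm_num) hm hq
end
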